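/- arXiv:1111.0669 — 2 statements merged into one kernel-verified Lean document; each statement's English description precedes it below -/
import Mathlib

section
/- The distributional Fourier transform of the function x ↦ j₀(Ω|x|) on ℝ², where j₀(s) = ∫₀^{2π} e^{is cos φ} dφ, is the measure (2π/Ω) δ(|k| - Ω); precisely, for every Schwartz function ψ on ℝ², ∫_{ℝ²} j₀(Ω|x|) (Fψ)(x) dx = (2π/Ω) ∫_{|k|=Ω} ψ(k) dσ(k) = 2π ∫₀^{2π} ψ(Ω cos φ, Ω sin φ) dφ, with the unitary convention Fψ(k) = (2π)^{-1} ∫ e^{-ik·x} ψ(x) dx. -/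
noncomputable section
open MeasureTheory

/-- j₀(s) = ∫₀^{2π} e^{i s cos φ} dφ. -/
def j0 (s : ℂ) : ℂ := ∫ φ in (0:ℝ)..(2 * Real.pi), Complex.exp (Complex.I * s * Complex.cos (φ : ℂ))

/-- Unitary Fourier transform on ℝ²: Fψ(k) = (2π)⁻¹ ∫ e^{-ik·x} ψ(x) dx. -/
def FT (ψ : ℝ × ℝ → ℂ) (k : ℝ × ℝ) : ℂ :=
  (2 * Real.pi : ℂ)⁻¹ * ∫ x : ℝ × ℝ, Complex.exp (-Complex.I * ((k.1 * x.1 + k.2 * x.2 : ℝ) : ℂ)) * ψ x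

section Aux
open Real FourierTransform Complex
open scoped RealInnerProductSpace

abbrev E2 := EuclideanSpace ℝ (Fin 2)

def T : E2 ≃L[ℝ] ℝ × ℝ :=
  (EuclideanSpace.equiv (Fin 2) ℝ).trans (ContinuousLinearEquiv.finTwoArrow ℝ ℝ)

lemma T_apply (v : E2) : T v = (v 0, v 1) := rfl

lemma hT_mp : MeasurePreserving (T : E2 → ℝ × ℝ) volume volume := by
  have h1 := EuclideanSpace.volume_preserving_symm_measurableEquiv_toLp (Fin 2)
  have h2 := MeasureTheory.volume_preserving_finTwoArrow ℝ
  have : (T : E2 → ℝ × ℝ) = (MeasurableEquiv.finTwoArrow : (Fin 2 → ℝ) ≃ᵐ ℝ × ℝ) ∘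
      (MeasurableEquiv.toLp 2 (Fin 2 → ℝ)).symm := rfl
  rw [this]; exact h2.comp h1

lemma hT_symm_mp : MeasurePreserving (⇑T.symm : ℝ × ℝ → E2) volume volume := by
  have h1 := (EuclideanSpace.volume_preserving_symm_measurableEquiv_toLp (Fin 2)).symm _
  have h2 := (MeasureTheory.volume_preserving_finTwoArrow ℝ).symm _
  have : (⇑T.symm : ℝ × ℝ → E2) = (MeasurableEquiv.toLp 2 (Fin 2 → ℝ)).symm.symm ∘
      (MeasurableEquiv.finTwoArrow : (Fin 2 → ℝ) ≃ᵐ ℝ × ℝ).symm := rfl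
  rw [this]; exact h1.comp h2

lemma inner_T (v w : E2) : ⟪v, w⟫ = (T v).1 * (T w).1 + (T v).2 * (T w).2 := by
  simp [PiLp.inner_apply, Fin.sum_univ_two, T_apply]; ring

/-- The Schwartz transfer of ψ to Euclidean space. -/
def Psi (ψ : SchwartzMap (ℝ × ℝ) ℂ) : SchwartzMap E2 ℂ :=
  SchwartzMap.compCLMOfContinuousLinearEquiv ℝ T ψ

lemma Psi_apply (ψ : SchwartzMap (ℝ × ℝ) ℂ) (v : E2) : Psi ψ v = ψ (T v) := rfl

lemma FT_eq (ψ : SchwartzMap (ℝ × ℝ) ℂ) (x : ℝ × ℝ) :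
    FT (fun y => ψ y) x = (2 * Real.pi : ℂ)⁻¹ * 𝓕 (Psi ψ) ((2 * Real.pi)⁻¹ • T.symm x) := by
  rw [FT]
  congr 1
  rw [SchwartzMap.fourier_coe, Real.fourier_eq']
  rw [← hT_mp.integral_comp T.toHomeomorph.measurableEmbedding]
  congr 1
  ext v
  rw [Psi_apply, smul_eq_mul]
  congr 1
  have h1 : ⟪v, (2 * Real.pi)⁻¹ • T.symm x⟫ = (2 * Real.pi)⁻¹ * ⟪v, T.symm x⟫ :=
    real_inner_smul_right _ _ _
  have h2 : ⟪v, T.symm x⟫ = (T v).1 * x.1 + (T v).2 * x.2 := by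
    rw [inner_T]; simp
  have hpi : (2 * Real.pi) ≠ 0 := by positivity
  rw [h1, h2]
  push_cast
  congr 1
  have hpic : (Real.pi : ℂ) ≠ 0 := Complex.ofReal_ne_zero.mpr Real.pi_ne_zero
  field_simp

lemma key (ψ : SchwartzMap (ℝ × ℝ) ℂ) (k : ℝ × ℝ) :
    ∫ x : ℝ × ℝ, Complex.exp (Complex.I * ((k.1 * x.1 + k.2 * x.2 : ℝ) : ℂ)) * FT (fun y => ψ y) x
      = (2 * Real.pi : ℂ) * ψ k := by
  have hpi : (0:ℝ) < 2 * Real.pi := by positivity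
  simp_rw [FT_eq]
  rw [← hT_mp.integral_comp T.toHomeomorph.measurableEmbedding]
  set κ : E2 := T.symm k with hκ
  set G : E2 → ℂ := fun w =>
    Complex.exp ((↑(2 * Real.pi * ⟪w, κ⟫) * Complex.I)) * ((2 * Real.pi : ℂ)⁻¹ * 𝓕 (Psi ψ) w)
    with hG
  have hGeq : ∀ v : E2,
      Complex.exp (Complex.I * ((k.1 * (T v).1 + k.2 * (T v).2 : ℝ) : ℂ)) *
        ((2 * Real.pi : ℂ)⁻¹ * 𝓕 (Psi ψ) ((2 * Real.pi)⁻¹ • T.symm (T v)))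
      = G ((2 * Real.pi)⁻¹ • v) := by
    intro v
    simp only [hG, ContinuousLinearEquiv.symm_apply_apply]
    congr 2
    have h1 : ⟪(2 * Real.pi)⁻¹ • v, κ⟫ = (2 * Real.pi)⁻¹ * ⟪v, κ⟫ := real_inner_smul_left _ _ _
    have h2 : ⟪v, κ⟫ = (T v).1 * k.1 + (T v).2 * k.2 := by
      rw [inner_T, hκ]; simp
    rw [h1, h2]
    push_cast
    have : (2:ℂ) * Real.pi ≠ 0 := by
      exact_mod_cast Complex.ofReal_ne_zero.mpr hpi.ne'
    field_simp
  simp_rw [hGeq]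
  rw [MeasureTheory.Measure.integral_comp_smul volume G ((2 * Real.pi)⁻¹)]
  have hfr : Module.finrank ℝ E2 = 2 := finrank_euclideanSpace_fin
  rw [hfr]
  have habs : |(((2 * Real.pi)⁻¹) ^ 2)⁻¹| = (2 * Real.pi)^2 := by
    rw [← inv_pow, inv_inv, abs_of_pos (by positivity)]
  rw [habs]
  have hIG : ∫ w, G w = (2 * Real.pi : ℂ)⁻¹ * Psi ψ κ := by
    rw [hG]
    have : ∫ w, Complex.exp ((↑(2 * Real.pi * ⟪w, κ⟫) * Complex.I)) *
        ((2 * Real.pi : ℂ)⁻¹ * 𝓕 (Psi ψ) w)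
        = (2 * Real.pi : ℂ)⁻¹ * ∫ w, Complex.exp ((↑(2 * Real.pi * ⟪w, κ⟫) * Complex.I)) *
          𝓕 (Psi ψ) w := by
      rw [← MeasureTheory.integral_const_mul]
      congr 1; ext w; ring
    rw [this]
    congr 1
    have hinv : 𝓕⁻ (𝓕 (⇑(Psi ψ))) κ = Psi ψ κ :=
      MeasureTheory.Integrable.fourierInv_fourier_eq (f := ⇑(Psi ψ)) (Psi ψ).integrable (SchwartzMap.fourierTransformCLM ℝ (Psi ψ)).integrable
        (Psi ψ).continuous.continuousAt
    rw [← hinv, Real.fourierInv_eq']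
    congr 1
  rw [hIG]
  have hψκ : Psi ψ κ = ψ k := by rw [Psi_apply, hκ]; simp
  rw [hψκ]
  rw [real_smul]
  push_cast
  have : (2:ℂ) * Real.pi ≠ 0 := by exact_mod_cast Complex.ofReal_ne_zero.mpr hpi.ne'
  field_simp

lemma FT_cont (ψ : SchwartzMap (ℝ × ℝ) ℂ) : Continuous (FT (fun y => ψ y)) := by
  have hrep : FT (fun y => ψ y)
      = fun x => (2 * Real.pi : ℂ)⁻¹ * 𝓕 (Psi ψ) ((2 * Real.pi)⁻¹ • T.symm x) :=
    funext (FT_eq ψ)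
  rw [hrep]
  exact continuous_const.mul
    ((SchwartzMap.fourierTransformCLM ℝ (Psi ψ)).continuous.comp
      ((T.symm.continuous).const_smul ((2 * Real.pi)⁻¹)))

lemma FT_integrable (ψ : SchwartzMap (ℝ × ℝ) ℂ) : Integrable (FT (fun y => ψ y)) volume := by
  have hrep : FT (fun y => ψ y)
      = fun x => (2 * Real.pi : ℂ)⁻¹ * 𝓕 (Psi ψ) ((2 * Real.pi)⁻¹ • T.symm x) :=
    funext (FT_eq ψ)
  rw [hrep]
  apply Integrable.const_mul
  have h1 : Integrable (fun v : E2 => 𝓕 (Psi ψ) ((2 * Real.pi)⁻¹ • v)) volume :=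
    (SchwartzMap.fourierTransformCLM ℝ (Psi ψ)).integrable.comp_smul
      (by positivity : (0:ℝ) < (2 * Real.pi)⁻¹).ne'
  exact (hT_symm_mp.integrable_comp_emb
    T.symm.toHomeomorph.measurableEmbedding).2 h1

lemma exists_polar (x : ℝ × ℝ) :
    ∃ α : ℝ, x.1 = Real.sqrt (x.1 ^ 2 + x.2 ^ 2) * Real.cos α ∧
      x.2 = Real.sqrt (x.1 ^ 2 + x.2 ^ 2) * Real.sin α := by
  set r := Real.sqrt (x.1 ^ 2 + x.2 ^ 2) with hr
  set z : ℂ := ⟨x.1, x.2⟩ with hz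
  have habs : ‖z‖ = r := by
    rw [Complex.norm_def, Complex.normSq_mk, hr]
    congr 1; ring
  by_cases h0 : z = 0
  · have h1 : x.1 = 0 := congrArg Complex.re h0
    have h2 : x.2 = 0 := congrArg Complex.im h0
    refine ⟨0, ?_, ?_⟩ <;> simp [h1, h2, hr]
  · refine ⟨Complex.arg z, ?_, ?_⟩
    · rw [Complex.cos_arg h0, habs]
      field_simp [habs ▸ (norm_ne_zero_iff.mpr h0)]
      rfl
    · rw [Complex.sin_arg, habs]
      field_simp [habs ▸ (norm_ne_zero_iff.mpr h0)]
      rfl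

lemma j0_eq (Ω : ℝ) (x : ℝ × ℝ) :
    j0 ((Ω * Real.sqrt (x.1 ^ 2 + x.2 ^ 2) : ℝ) : ℂ)
      = ∫ φ in (0:ℝ)..(2 * Real.pi),
          Complex.exp (Complex.I * ((Ω * Real.cos φ * x.1 + Ω * Real.sin φ * x.2 : ℝ) : ℂ)) := by
  obtain ⟨α, h1, h2⟩ := exists_polar x
  set r := Real.sqrt (x.1 ^ 2 + x.2 ^ 2) with hr
  set f : ℝ → ℂ := fun u => Complex.exp (Complex.I * ((Ω * r * Real.cos u : ℝ) : ℂ)) with hf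
  have hper : Function.Periodic f (2 * Real.pi) := by
    intro u; simp only [hf, Real.cos_add_two_pi]
  have hrhs : ∀ φ : ℝ,
      Complex.exp (Complex.I * ((Ω * Real.cos φ * x.1 + Ω * Real.sin φ * x.2 : ℝ) : ℂ))
        = f (φ - α) := by
    intro φ
    simp only [hf]
    congr 2
    rw [Real.cos_sub, h1, h2]
    push_cast
    ring
  calc j0 ((Ω * r : ℝ) : ℂ)
      = ∫ φ in (0:ℝ)..(2 * Real.pi), f φ := by
        rw [j0]
        congr 1; ext φ
        simp only [hf]
        rw [← Complex.ofReal_cos]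
        congr 1
        push_cast
        ring
    _ = ∫ φ in (0:ℝ)..(2 * Real.pi), f (φ - α) := by
        rw [intervalIntegral.integral_comp_sub_right f α]
        have h0 : (0:ℝ) - α = -α := by ring
        have h2' : 2 * Real.pi - α = -α + 2 * Real.pi := by ring
        rw [h0, h2']
        have := hper.intervalIntegral_add_eq 0 (-α)
        simpa using this
    _ = _ := by
        simp_rw [hrhs]

end Aux

theorem fourier_of_bessel (Ω : ℝ) (hΩ : 0 < Ω) (ψ : SchwartzMap (ℝ × ℝ) ℂ) :
    ∫ x : ℝ × ℝ, j0 ((Ω * Real.sqrt (x.1 ^ 2 + x.2 ^ 2) : ℝ) : ℂ) * FT (fun y => ψ y) x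
      = (2 * Real.pi : ℂ) *
        ∫ φ in (0:ℝ)..(2 * Real.pi), ψ (Ω * Real.cos φ, Ω * Real.sin φ) := by
  have h2π : (0:ℝ) ≤ 2 * Real.pi := by positivity
  have hgc := FT_cont ψ
  have hgi := FT_integrable ψ
  set g := FT (fun y => ψ y) with hg
  have hH : Integrable
      (Function.uncurry fun (x : ℝ × ℝ) (φ : ℝ) =>
        Complex.exp (Complex.I * ((Ω * Real.cos φ * x.1 + Ω * Real.sin φ * x.2 : ℝ) : ℂ)) * g x)
      (volume.prod (volume.restrict (Set.Ioc (0:ℝ) (2 * Real.pi)))) := by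
    have hbound : Integrable
        (fun z : (ℝ × ℝ) × ℝ => ‖g z.1‖ * 1)
        (volume.prod (volume.restrict (Set.Ioc (0:ℝ) (2 * Real.pi)))) :=
      (hgi.norm).mul_prod (integrableOn_const measure_Ioc_lt_top.ne)
    have hc1 : Continuous fun z : (ℝ × ℝ) × ℝ =>
        (Ω * Real.cos z.2 * z.1.1 + Ω * Real.sin z.2 * z.1.2 : ℝ) := by fun_prop
    have hcont : Continuous
        (Function.uncurry fun (x : ℝ × ℝ) (φ : ℝ) =>
          Complex.exp (Complex.I * ((Ω * Real.cos φ * x.1 + Ω * Real.sin φ * x.2 : ℝ) : ℂ)) * g x) := by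
      apply Continuous.mul
      · exact Complex.continuous_exp.comp
          (continuous_const.mul (Complex.continuous_ofReal.comp hc1))
      · exact hgc.comp continuous_fst
    refine hbound.mono' hcont.aestronglyMeasurable ?_
    refine Filter.Eventually.of_forall fun z => ?_
    rw [Function.uncurry]
    rw [norm_mul]
    have : ‖Complex.exp (Complex.I *
        ((Ω * Real.cos z.2 * z.1.1 + Ω * Real.sin z.2 * z.1.2 : ℝ) : ℂ))‖ = 1 := by
      rw [Complex.norm_exp]
      simp
    rw [this, one_mul, mul_one]
  calc ∫ x : ℝ × ℝ, j0 ((Ω * Real.sqrt (x.1 ^ 2 + x.2 ^ 2) : ℝ) : ℂ) * g x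
      = ∫ x : ℝ × ℝ, ∫ φ in Set.Ioc (0:ℝ) (2 * Real.pi),
          Complex.exp (Complex.I * ((Ω * Real.cos φ * x.1 + Ω * Real.sin φ * x.2 : ℝ) : ℂ)) * g x := by
        refine integral_congr_ae (Filter.Eventually.of_forall fun x => ?_)
        beta_reduce
        rw [j0_eq Ω x, ← intervalIntegral.integral_mul_const,
          intervalIntegral.integral_of_le h2π]
    _ = ∫ φ in Set.Ioc (0:ℝ) (2 * Real.pi), ∫ x : ℝ × ℝ,
          Complex.exp (Complex.I * ((Ω * Real.cos φ * x.1 + Ω * Real.sin φ * x.2 : ℝ) : ℂ)) * g x :=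
        integral_integral_swap hH
    _ = ∫ φ in Set.Ioc (0:ℝ) (2 * Real.pi), (2 * Real.pi : ℂ) * ψ (Ω * Real.cos φ, Ω * Real.sin φ) := by
        refine integral_congr_ae (Filter.Eventually.of_forall fun φ => ?_)
        beta_reduce
        exact key ψ (Ω * Real.cos φ, Ω * Real.sin φ)
    _ = (2 * Real.pi : ℂ) * ∫ φ in (0:ℝ)..(2 * Real.pi), ψ (Ω * Real.cos φ, Ω * Real.sin φ) := by
        rw [integral_const_mul, intervalIntegral.integral_of_le h2π]
end
end

section
/- The SE(2)-Bargmann transform is an isometry: for all Φ ∈ L²(S¹), ∫₀^{2π} ∫₀^{2π} |N e^{λΩ cos(θ - φ)} Φ(φ)|² dφ dθ = ‖Φ‖²_{L²(S¹)}, where N = (∫₀^{2π} e^{2λΩ cos φ} dφ)^{-1/2}; equivalently, the angular part of the Fourier data of B_Ω^λ Φ has L²(S¹×S¹)-norm equal to ‖Φ‖_{L²(S¹)}. -/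
noncomputable section

open MeasureTheory Real Set

private lemma theta_integral (c φ : ℝ) :
    (∫ θ in (0:ℝ)..(2 * Real.pi), Real.exp (c * Real.cos (θ - φ)))
      = ∫ s in (0:ℝ)..(2 * Real.pi), Real.exp (c * Real.cos s) := by
  have hper : Function.Periodic (fun s => Real.exp (c * Real.cos s)) (2 * Real.pi) := by
    intro x
    simp [Real.cos_add_two_pi]
  have h1 : (∫ θ in (0:ℝ)..(2 * Real.pi), Real.exp (c * Real.cos (θ - φ)))
      = ∫ u in (0 - φ)..(2 * Real.pi - φ), Real.exp (c * Real.cos u) :=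
    (intervalIntegral.integral_comp_sub_right (fun u => Real.exp (c * Real.cos u)) φ)
  rw [h1]
  have := hper.intervalIntegral_add_eq (0 - φ) 0
  simpa [zero_add, sub_add_eq_add_sub, zero_sub, neg_add_eq_sub] using this

/-- The SE(2)-Bargmann transform is an isometry from L²(S¹) onto its image:
the angular Fourier data (φ,θ) ↦ N e^{λΩ cos(θ-φ)} Φ(φ) of B_Ω^λ Φ has
L²(S¹×S¹)-norm equal to ‖Φ‖_{L²(S¹)}, where N = (∫₀^{2π} e^{2λΩ cos s} ds)^{-1/2}. -/
theorem bargmann_SE2_isometry (lam Ω : ℝ) (hlam : 0 < lam) (hΩ : 0 < Ω)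
    (Φ : ℝ → ℂ)
    (hΦ : MeasureTheory.MemLp Φ 2 (MeasureTheory.volume.restrict (Set.Ioc 0 (2 * Real.pi)))) :
    (∫ θ in (0:ℝ)..(2 * Real.pi), ∫ φ in (0:ℝ)..(2 * Real.pi),
        ‖((∫ s in (0:ℝ)..(2 * Real.pi), Real.exp (2 * lam * Ω * Real.cos s)) ^ (-(1:ℝ)/2)
            * Real.exp (lam * Ω * Real.cos (θ - φ)) : ℝ) * Φ φ‖ ^ 2)
      = ∫ φ in (0:ℝ)..(2 * Real.pi), ‖Φ φ‖ ^ 2 := by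
  have h2pi : (0:ℝ) < 2 * Real.pi := by positivity
  set C : ℝ := ∫ s in (0:ℝ)..(2 * Real.pi), Real.exp (2 * lam * Ω * Real.cos s) with hCdef
  have hCint : IntervalIntegrable (fun s => Real.exp (2 * lam * Ω * Real.cos s))
      volume 0 (2 * Real.pi) := (Continuous.intervalIntegrable (by continuity) _ _)
  have hC : 0 < C :=
    intervalIntegral.intervalIntegral_pos_of_pos hCint (fun x => Real.exp_pos _) h2pi
  set N : ℝ := C ^ (-(1:ℝ)/2) with hNdef
  have hN : 0 < N := Real.rpow_pos_of_pos hC _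
  have hN2 : N ^ 2 = C⁻¹ := by
    rw [hNdef, ← Real.rpow_natCast (C ^ (-(1:ℝ)/2)) 2, ← Real.rpow_mul hC.le]
    norm_num [Real.rpow_neg_one]
  -- rewrite the integrand
  have hnorm : ∀ θ φ : ℝ,
      ‖((N * Real.exp (lam * Ω * Real.cos (θ - φ))) : ℝ) * Φ φ‖ ^ 2
        = N ^ 2 * Real.exp (2 * lam * Ω * Real.cos (θ - φ)) * ‖Φ φ‖ ^ 2 := by
    intro θ φ
    have hpos : (0:ℝ) ≤ N * Real.exp (lam * Ω * Real.cos (θ - φ)) :=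
      mul_nonneg hN.le (Real.exp_pos _).le
    rw [norm_mul, Complex.norm_real, Real.norm_eq_abs, abs_of_nonneg hpos]
    have : Real.exp (lam * Ω * Real.cos (θ - φ)) ^ 2
        = Real.exp (2 * lam * Ω * Real.cos (θ - φ)) := by
      rw [← Real.exp_nat_mul]; ring_nf
    rw [mul_pow, mul_pow, this]
  -- integrability of |Φ|^2
  have hΦ2 : Integrable (fun φ => ‖Φ φ‖ ^ 2)
      (volume.restrict (Set.Ioc 0 (2 * Real.pi))) := by
    have := hΦ.integrable_norm_rpow (by norm_num) (by norm_num)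
    simpa [ENNReal.toReal_ofNat, Real.rpow_natCast] using this
  -- the product function and Fubini
  set F : ℝ × ℝ → ℝ := fun z =>
    N ^ 2 * Real.exp (2 * lam * Ω * Real.cos (z.1 - z.2)) * ‖Φ z.2‖ ^ 2 with hFdef
  have hFmeas : AEStronglyMeasurable F
      ((volume.restrict (Set.Ioc 0 (2 * Real.pi))).prod
        (volume.restrict (Set.Ioc 0 (2 * Real.pi)))) := by
    apply AEStronglyMeasurable.mul
    · have hcont : Continuous (fun z : ℝ × ℝ =>
          N ^ 2 * Real.exp (2 * lam * Ω * Real.cos (z.1 - z.2))) :=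
        continuous_const.mul (Real.continuous_exp.comp
          (continuous_const.mul (Real.continuous_cos.comp (continuous_fst.sub continuous_snd))))
      exact hcont.aestronglyMeasurable
    · exact (hΦ.aestronglyMeasurable.norm.pow 2).comp_snd
  have hFint : Integrable F
      ((volume.restrict (Set.Ioc 0 (2 * Real.pi))).prod
        (volume.restrict (Set.Ioc 0 (2 * Real.pi)))) := by
    have hbound : Integrable (fun z : ℝ × ℝ =>
        (N ^ 2 * Real.exp (2 * lam * Ω)) * ‖Φ z.2‖ ^ 2)
        ((volume.restrict (Set.Ioc 0 (2 * Real.pi))).prod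
          (volume.restrict (Set.Ioc 0 (2 * Real.pi)))) := by
      have h1 : Integrable (fun _ : ℝ => N ^ 2 * Real.exp (2 * lam * Ω))
          (volume.restrict (Set.Ioc 0 (2 * Real.pi))) := by
        apply integrable_const
      simpa using h1.mul_prod hΦ2
    refine hbound.mono' hFmeas ?_
    filter_upwards with z
    have hc : Real.cos (z.1 - z.2) ≤ 1 := Real.cos_le_one _
    have : Real.exp (2 * lam * Ω * Real.cos (z.1 - z.2)) ≤ Real.exp (2 * lam * Ω) := by
      apply Real.exp_le_exp.2
      nlinarith [mul_le_mul_of_nonneg_left hc (show (0:ℝ) ≤ 2 * lam * Ω by positivity)]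
    have hFnn : 0 ≤ F z := by positivity
    rw [Real.norm_eq_abs, abs_of_nonneg hFnn]
    have hnn : (0:ℝ) ≤ ‖Φ z.2‖ ^ 2 := by positivity
    calc F z = N ^ 2 * Real.exp (2 * lam * Ω * Real.cos (z.1 - z.2)) * ‖Φ z.2‖ ^ 2 := rfl
      _ ≤ N ^ 2 * Real.exp (2 * lam * Ω) * ‖Φ z.2‖ ^ 2 := by
          apply mul_le_mul_of_nonneg_right _ hnn
          exact mul_le_mul_of_nonneg_left this (by positivity)
  -- convert to set integrals and swap
  rw [intervalIntegral.integral_of_le h2pi.le]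
  simp_rw [hnorm]
  rw [show (∫ θ in Set.Ioc 0 (2 * Real.pi), ∫ φ in (0:ℝ)..(2 * Real.pi),
        N ^ 2 * Real.exp (2 * lam * Ω * Real.cos (θ - φ)) * ‖Φ φ‖ ^ 2)
      = ∫ θ in Set.Ioc 0 (2 * Real.pi), ∫ φ in Set.Ioc 0 (2 * Real.pi), F (θ, φ) from by
    simp_rw [intervalIntegral.integral_of_le h2pi.le]; rfl]
  rw [MeasureTheory.integral_integral_swap hFint]
  rw [intervalIntegral.integral_of_le h2pi.le]
  apply MeasureTheory.setIntegral_congr_fun measurableSet_Ioc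
  intro φ _
  show (∫ θ in Set.Ioc 0 (2 * Real.pi), F (θ, φ)) = ‖Φ φ‖ ^ 2
  have hθ : (∫ θ in Set.Ioc 0 (2 * Real.pi), F (θ, φ))
      = N ^ 2 * C * ‖Φ φ‖ ^ 2 := by
    have : (∫ θ in Set.Ioc 0 (2 * Real.pi), F (θ, φ))
        = (∫ θ in (0:ℝ)..(2 * Real.pi),
            Real.exp (2 * lam * Ω * Real.cos (θ - φ))) * (N ^ 2 * ‖Φ φ‖ ^ 2) := by
      rw [intervalIntegral.integral_of_le h2pi.le, ← integral_mul_const]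
      apply setIntegral_congr_fun measurableSet_Ioc
      intro θ _
      simp only [hFdef]; ring
    rw [this, theta_integral, ← hCdef]; ring
  rw [hθ, hN2]
  field_simp

end
end
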